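/- On the set Σ^∞ of all nonempty finite and infinite words over a nonempty alphabet Σ, the function p_B(x,y) = 2^{-l(x,y)}, where l(x,y) is the length of the longest common prefix of x and y (l(x,y) = 0 if x₁ ≠ y₁, and 2^{-∞} = 0), is a partial metric, and the partial metric space (Σ^∞, p_B) is complete. -/

import Mathlib

open scoped NNReal ENNReal

/-- A nonempty finite or infinite word over an alphabet `α`: letters are indexed
from `1`, the domain of defined letters is an initial segment. -/
structure PWord (α : Type*) where
  toFun : ℕ → Option α
  map_zero' : toFun 0 = none
  map_one' : (toFun 1).isSome = true
  mono' : ∀ n, 1 ≤ n → (toFun (n + 1)).isSome = true → (toFun n).isSome = true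

/-- The length `l(x) ∈ [1,∞]` of a word. -/
noncomputable def PWord.len {α : Type*} (x : PWord α) : ℕ∞ :=
  ⨆ n ∈ {n : ℕ | (x.toFun n).isSome = true}, (n : ℕ∞)

/-- `l(x,y)`: the length of the longest common prefix of `x` and `y`
(`0` if they have no common prefix). -/
noncomputable def lcp {α : Type*} (x y : PWord α) : ℕ∞ :=
  ⨆ n ∈ {n : ℕ | ∀ k, 1 ≤ k → k ≤ n →
      (x.toFun k).isSome = true ∧ x.toFun k = y.toFun k}, (n : ℕ∞)

/-- `2^{-m}` for `m ∈ ℕ∞`, with `2^{-∞} = 0`. -/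
noncomputable def epow (m : ℕ∞) : ℝ≥0 := WithTop.recTopCoe 0 (fun n => 2⁻¹ ^ n) m

/-- The Baire partial metric `p_B(x,y) = 2^{-l(x,y)}`. -/
noncomputable def pB {α : Type*} (x y : PWord α) : ℝ≥0 := epow (lcp x y)

namespace BaireAux

variable {α : Type*}

/-- The set of common-prefix lengths. -/
def S (x y : PWord α) : Set ℕ :=
  {n : ℕ | ∀ k, 1 ≤ k → k ≤ n → (x.toFun k).isSome = true ∧ x.toFun k = y.toFun k}

lemma lcp_def (x y : PWord α) : lcp x y = ⨆ n ∈ S x y, (n : ℕ∞) := rfl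

lemma zero_mem_S (x y : PWord α) : 0 ∈ S x y := by
  intro k hk hk0; omega

lemma S_down {x y : PWord α} {m n : ℕ} (hmn : m ≤ n) (hn : n ∈ S x y) : m ∈ S x y :=
  fun k hk hkm => hn k hk (hkm.trans hmn)

lemma S_symm {x y : PWord α} {n : ℕ} (hn : n ∈ S x y) : n ∈ S y x := by
  intro k hk hkn
  obtain ⟨h1, h2⟩ := hn k hk hkn
  exact ⟨h2 ▸ h1, h2.symm⟩

lemma mem_S_le_lcp {x y : PWord α} {n : ℕ} (hn : n ∈ S x y) : (n : ℕ∞) ≤ lcp x y :=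
  le_iSup₂ (f := fun (n : ℕ) (_ : n ∈ S x y) => (n : ℕ∞)) n hn

lemma le_lcp_iff {x y : PWord α} {n : ℕ} : (n : ℕ∞) ≤ lcp x y ↔ n ∈ S x y := by
  constructor
  · intro h
    rcases Nat.eq_zero_or_pos n with rfl | hn0
    · exact zero_mem_S x y
    by_contra hn
    have hb : lcp x y ≤ ((n - 1 : ℕ) : ℕ∞) := by
      refine iSup₂_le fun m hm => ?_
      have : m ≤ n - 1 := by
        by_contra hmn
        exact hn (S_down (by omega) hm)
      exact_mod_cast this
    have := h.trans hb
    have : n ≤ n - 1 := by exact_mod_cast this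
    omega
  · exact mem_S_le_lcp

lemma lcp_le_lcp {x y z w : PWord α} (h : S x y ⊆ S z w) : lcp x y ≤ lcp z w :=
  iSup₂_le fun n hn => mem_S_le_lcp (h hn)

lemma lcp_symm (x y : PWord α) : lcp x y = lcp y x :=
  le_antisymm (lcp_le_lcp fun _ h => S_symm h) (lcp_le_lcp fun _ h => S_symm h)

lemma lcp_le_self (x y : PWord α) : lcp x y ≤ lcp x x :=
  lcp_le_lcp fun n hn k hk hkn => ⟨(hn k hk hkn).1, rfl⟩

lemma lcp_eq_top (x y : PWord α) (h : ∀ n : ℕ, n ∈ S x y) : lcp x y = ⊤ := by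
  by_contra hne
  lift lcp x y to ℕ using hne with m hm
  have := le_lcp_iff.mpr (h (m + 1))
  rw [← hm] at this
  exact absurd (by exact_mod_cast this) (by omega)

/-- Downward closure of definedness. -/
lemma isSome_of_le {x : PWord α} {m n : ℕ} (hm : 1 ≤ m) (hmn : m ≤ n)
    (hn : (x.toFun n).isSome = true) : (x.toFun m).isSome = true := by
  induction n with
  | zero => omega
  | succ k ih =>
    rcases Nat.lt_or_ge m (k + 1) with h | h
    · exact ih (by omega) (x.mono' k (by omega) hn)
    · have : m = k + 1 := by omega
      exact this ▸ hn

lemma self_mem_S {x : PWord α} {n : ℕ} (hn : (x.toFun n).isSome = true) (h1 : 1 ≤ n) :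
    n ∈ S x x := fun k hk hkn => ⟨isSome_of_le hk hkn hn, rfl⟩

/-! ### epow lemmas -/

lemma epow_top : epow ⊤ = 0 := rfl

lemma epow_coe (n : ℕ) : epow (n : ℕ∞) = 2⁻¹ ^ n := rfl

lemma half_pos : (0 : ℝ≥0) < 2⁻¹ := by
  rw [← NNReal.coe_lt_coe]; norm_num

lemma half_lt_one : (2⁻¹ : ℝ≥0) < 1 := by
  rw [← NNReal.coe_lt_coe]; norm_num

lemma epow_anti {a b : ℕ∞} (h : a ≤ b) : epow b ≤ epow a := by
  induction b using ENat.recTopCoe with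
  | top => rw [epow_top]; exact zero_le
  | coe m =>
    rcases WithTop.le_coe_iff.mp h with ⟨n, rfl, hnm⟩
    show (2⁻¹ : ℝ≥0) ^ m ≤ 2⁻¹ ^ n
    exact pow_le_pow_of_le_one zero_le half_lt_one.le hnm

lemma epow_strictAnti {m n : ℕ} (h : m < n) : epow (n : ℕ∞) < epow (m : ℕ∞) := by
  show (2⁻¹ : ℝ≥0) ^ n < 2⁻¹ ^ m
  exact pow_lt_pow_right_of_lt_one₀ half_pos half_lt_one h

lemma epow_pos (n : ℕ) : 0 < epow (n : ℕ∞) := by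
  show (0:ℝ≥0) < 2⁻¹ ^ n
  positivity

lemma epow_inj {a b : ℕ∞} (h : epow a = epow b) : a = b := by
  induction a using ENat.recTopCoe with
  | top =>
    induction b using ENat.recTopCoe with
    | top => rfl
    | coe n => exact absurd h.symm (ne_of_gt (by simpa [epow_top] using epow_pos n))
  | coe m =>
    induction b using ENat.recTopCoe with
    | top => exact absurd h (ne_of_gt (by simpa [epow_top] using epow_pos m))
    | coe n =>
      rcases lt_trichotomy m n with hmn | rfl | hmn
      · exact absurd h (epow_strictAnti hmn).ne'
      · rfl
      · exact absurd h (epow_strictAnti hmn).ne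

end BaireAux

namespace BaireAux

variable {α : Type*}

lemma pword_ext {x y : PWord α} (h : x.toFun = y.toFun) : x = y := by
  cases x; cases y; simpa using h

lemma eq_of_lcp {x y : PWord α} (h1 : lcp x x ≤ lcp x y) (h2 : lcp y y ≤ lcp x y) :
    x = y := by
  apply pword_ext
  funext k
  rcases Nat.eq_zero_or_pos k with rfl | hk
  · rw [x.map_zero', y.map_zero']
  by_cases hx : (x.toFun k).isSome = true
  · have hkS : k ∈ S x y := le_lcp_iff.mp ((mem_S_le_lcp (self_mem_S hx hk)).trans h1)
    exact (hkS k hk le_rfl).2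
  · by_cases hy : (y.toFun k).isSome = true
    · have hkS : k ∈ S x y :=
        le_lcp_iff.mp ((mem_S_le_lcp (self_mem_S hy hk)).trans h2)
      exact absurd (hkS k hk le_rfl).1 hx
    · rw [Option.not_isSome_iff_eq_none.mp hx, Option.not_isSome_iff_eq_none.mp hy]

lemma mem_S_trans {x y z : PWord α} {n : ℕ} (h1 : n ∈ S x z) (h2 : n ∈ S z y) :
    n ∈ S x y := fun k hk hkn =>
  ⟨(h1 k hk hkn).1, (h1 k hk hkn).2.trans (h2 k hk hkn).2⟩

lemma min_lcp_le (x y z : PWord α) : min (lcp x z) (lcp z y) ≤ lcp x y := by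
  rcases eq_or_ne (min (lcp x z) (lcp z y)) ⊤ with htop | hne
  · rw [htop]
    obtain ⟨h1, h2⟩ := min_eq_top.mp htop
    rw [lcp_eq_top x y fun n =>
      mem_S_trans (le_lcp_iff.mp (h1 ▸ le_top)) (le_lcp_iff.mp (h2 ▸ le_top))]
  · obtain ⟨j, hj⟩ := WithTop.ne_top_iff_exists.mp hne
    rw [← hj]
    have hj1 : (j : ℕ∞) ≤ lcp x z := hj.le.trans (min_le_left _ _)
    have hj2 : (j : ℕ∞) ≤ lcp z y := hj.le.trans (min_le_right _ _)
    exact mem_S_le_lcp (mem_S_trans (le_lcp_iff.mp hj1) (le_lcp_iff.mp hj2))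

lemma min_add_max' (a b : ℝ≥0) : max a b + min a b = a + b := by
  rcases le_total a b with h | h
  · rw [max_eq_right h, min_eq_left h, add_comm]
  · rw [max_eq_left h, min_eq_right h]

lemma sep_axiom {x y : PWord α} (h1 : pB x x = pB x y) (h2 : pB x y = pB y y) : x = y := by
  have e1 : lcp x x = lcp x y := epow_inj h1
  have e2 : lcp x y = lcp y y := epow_inj h2
  exact eq_of_lcp e1.le e2.ge

lemma pB_self_le (x y : PWord α) : pB x x ≤ pB x y := epow_anti (lcp_le_self x y)

lemma pB_symm (x y : PWord α) : pB x y = pB y x := by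
  unfold pB; rw [lcp_symm]

lemma pB_triangle (x y z : PWord α) : pB x y + pB z z ≤ pB x z + pB z y := by
  have h1 : pB x y ≤ max (pB x z) (pB z y) := by
    refine (epow_anti (min_lcp_le x y z)).trans ?_
    rcases min_cases (lcp x z) (lcp z y) with ⟨h, _⟩ | ⟨h, _⟩ <;> rw [h]
    · exact le_max_left _ _
    · exact le_max_right _ _
  have h2 : pB z z ≤ min (pB x z) (pB z y) := by
    refine le_min ?_ ?_
    · have : lcp x z ≤ lcp z z := (lcp_symm x z).le.trans (lcp_le_self z x)
      exact epow_anti this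
    · exact epow_anti (lcp_le_self z y)
  calc pB x y + pB z z ≤ max (pB x z) (pB z y) + min (pB x z) (pB z y) :=
        add_le_add h1 h2
    _ = pB x z + pB z y := min_add_max' _ _

end BaireAux

namespace BaireAux

variable {α : Type*}

lemma pow_gap {a b K : ℕ} (ha : a ≤ K) (hb : b ≤ K)
    (h : |(2⁻¹ : ℝ) ^ a - 2⁻¹ ^ b| < 2⁻¹ ^ K) : a = b := by
  by_contra hne
  wlog hab : a < b generalizing a b
  · exact this hb ha (by rwa [abs_sub_comm]) (Ne.symm hne) (by omega)
  have h1 : (2⁻¹ : ℝ) ^ b ≤ 2⁻¹ ^ (a + 1) :=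
    pow_le_pow_of_le_one (by norm_num) (by norm_num) (by omega)
  have h2 : (2⁻¹ : ℝ) ^ K ≤ 2⁻¹ ^ (a + 1) :=
    pow_le_pow_of_le_one (by norm_num) (by norm_num) (by omega)
  have e : (2⁻¹ : ℝ) ^ (a + 1) = 2⁻¹ ^ a - 2⁻¹ ^ (a + 1) := by
    rw [pow_succ]; ring
  have := (abs_lt.mp h).2
  linarith

/-- Finite `lcp` extraction. -/
lemma lcp_lt_coe {x y : PWord α} {k : ℕ} (h : lcp x y < (k : ℕ∞)) :
    ∃ j : ℕ, lcp x y = (j : ℕ∞) ∧ j < k := by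
  have hne : lcp x y ≠ ⊤ := by
    intro htop
    rw [htop] at h
    exact absurd h (by simp)
  obtain ⟨j, hj⟩ := WithTop.ne_top_iff_exists.mp hne
  refine ⟨j, hj.symm, ?_⟩
  rw [← hj] at h
  exact Nat.cast_lt.mp (show ((j : ℕ) : ℕ∞) < ((k : ℕ) : ℕ∞) from h)

end BaireAux


open BaireAux Filter

/-- `p_B` is a partial metric on `Σ^∞` and `(Σ^∞, p_B)` is a complete
partial metric space: whenever `lim_{n,m→∞} p_B(xₙ,xₘ) = L` exists, the sequence
converges in the topology of `p_B` to a word `l` with `p_B(l,l) = L`. -/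
theorem baire_stmt8 {α : Type*} [Nonempty α] :
    (∀ x y : PWord α, (pB x x = pB x y ∧ pB x y = pB y y) ↔ x = y) ∧
      (∀ x y : PWord α, pB x x ≤ pB x y) ∧
      (∀ x y : PWord α, pB x y = pB y x) ∧
      (∀ x y z : PWord α, pB x y + pB z z ≤ pB x z + pB z y) ∧
      (∀ (x : ℕ → PWord α) (L : ℝ≥0),
        Filter.Tendsto (fun mn : ℕ × ℕ => pB (x mn.1) (x mn.2)) Filter.atTop (nhds L) →
        ∃ l : PWord α, pB l l = L ∧
          ∀ ε : ℝ≥0, 0 < ε → ∃ N, ∀ n, N ≤ n → pB l (x n) < pB l l + ε) := by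
  refine ⟨fun x y => ⟨fun ⟨h1, h2⟩ => sep_axiom h1 h2, fun h => by subst h; exact ⟨rfl, rfl⟩⟩,
    pB_self_le, pB_symm, pB_triangle, ?_⟩
  intro x L hL
  by_cases H : ∀ k : ℕ, ∃ N : ℕ, ∀ n m, N ≤ n → N ≤ m → (k : ℕ∞) ≤ lcp (x n) (x m)
  · -- limit 0 case: build the infinite word
    choose N hN using H
    set M : ℕ → ℕ := fun k => (Finset.range (k + 1)).sup N with hMdef
    have hMN : ∀ k, N k ≤ M k := fun k => Finset.le_sup (Finset.self_mem_range_succ k)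
    have hMmono : Monotone M := fun a b hab =>
      Finset.sup_mono (Finset.range_subset_range.mpr (by omega))
    have key : ∀ k, 1 ≤ k → ((x (M k)).toFun k).isSome = true := fun k hk =>
      ((le_lcp_iff.mp (hN k (M k) (M k) (hMN k) (hMN k))) k hk le_rfl).1
    obtain ⟨l, hl⟩ : ∃ l : PWord α,
        ∀ k, l.toFun k = if k = 0 then none else (x (M k)).toFun k := by
      refine ⟨⟨fun k => if k = 0 then none else (x (M k)).toFun k, by simp, ?_, ?_⟩,
        fun k => rfl⟩
      · simpa using key 1 le_rfl
      · intro n hn _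
        simp only [if_neg (by omega : n ≠ 0)]
        exact key n hn
    have hlself : ∀ k : ℕ, k ∈ S l l := by
      intro k j hj hjk
      rw [hl j, if_neg (by omega : j ≠ 0)]
      exact ⟨key j hj, rfl⟩
    have hpBll : pB l l = 0 := by
      unfold pB
      rw [lcp_eq_top l l hlself]
      rfl
    have hagree : ∀ k, 1 ≤ k → ∀ n, M k ≤ n → (k : ℕ∞) ≤ lcp l (x n) := by
      intro k hk n hn
      refine le_lcp_iff.mpr fun j hj hjk => ?_
      rw [hl j, if_neg (by omega : j ≠ 0)]
      have hNjn : N j ≤ n := (hMN j).trans ((hMmono hjk).trans hn)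
      have := (le_lcp_iff.mp (hN j (M j) n (hMN j) hNjn)) j hj le_rfl
      exact ⟨key j hj, this.2⟩
    have hL0 : L = 0 := by
      refine tendsto_nhds_unique hL ?_
      refine Metric.tendsto_atTop.mpr fun ε hε => ?_
      obtain ⟨K, hK⟩ := exists_pow_lt_of_lt_one hε (by norm_num : (2⁻¹ : ℝ) < 1)
      refine ⟨(N K, N K), fun p hp => ?_⟩
      have hlcp : (K : ℕ∞) ≤ lcp (x p.1) (x p.2) := hN K p.1 p.2 hp.1 hp.2
      have hb : pB (x p.1) (x p.2) ≤ 2⁻¹ ^ K := by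
        have := epow_anti hlcp
        rwa [epow_coe] at this
      rw [NNReal.dist_eq]
      have h0 : (0 : ℝ) ≤ (pB (x p.1) (x p.2) : ℝ) := (pB _ _).coe_nonneg
      have hble : ((pB (x p.1) (x p.2) : ℝ≥0) : ℝ) ≤ (2⁻¹ : ℝ) ^ K := by
        calc ((pB (x p.1) (x p.2) : ℝ≥0) : ℝ) ≤ (((2⁻¹ : ℝ≥0) ^ K : ℝ≥0) : ℝ) := by
              exact_mod_cast hb
          _ = (2⁻¹ : ℝ) ^ K := by push_cast; norm_num
      rw [NNReal.coe_zero, sub_zero, abs_of_nonneg h0]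
      exact hble.trans_lt hK
    refine ⟨l, by rw [hpBll, hL0], fun ε hε => ?_⟩
    obtain ⟨K, hK⟩ := exists_pow_lt_of_lt_one hε half_lt_one
    refine ⟨M (K + 1), fun n hn => ?_⟩
    have h1 : pB l (x n) ≤ 2⁻¹ ^ (K + 1) := by
      have := epow_anti (hagree (K + 1) (by omega) n hn)
      rwa [epow_coe] at this
    have h2 : (2⁻¹ : ℝ≥0) ^ (K + 1) ≤ 2⁻¹ ^ K :=
      pow_le_pow_of_le_one zero_le half_lt_one.le (by omega)
    calc pB l (x n) ≤ 2⁻¹ ^ (K + 1) := h1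
      _ ≤ 2⁻¹ ^ K := h2
      _ < ε := hK
      _ ≤ pB l l + ε := le_add_self
  · -- eventually constant case
    push_neg at H
    obtain ⟨k, hk⟩ := H
    have hk1 : 1 ≤ k := by
      by_contra hk0
      have : k = 0 := by omega
      subst this
      obtain ⟨n, m, _, _, hlt⟩ := hk 0
      exact absurd hlt (by simp)
    -- Cauchy property
    have hC : ∀ ε : ℝ, 0 < ε → ∃ N : ℕ, ∀ p q : ℕ × ℕ, N ≤ p.1 → N ≤ p.2 →
        N ≤ q.1 → N ≤ q.2 →
        |((pB (x p.1) (x p.2) : ℝ≥0) : ℝ) - ((pB (x q.1) (x q.2) : ℝ≥0) : ℝ)| < ε := by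
      intro ε hε
      obtain ⟨P, hP⟩ := Metric.tendsto_atTop.mp hL (ε / 2) (by linarith)
      refine ⟨max P.1 P.2, fun p q hp1 hp2 hq1 hq2 => ?_⟩
      have hp : P ≤ p := ⟨le_trans (le_max_left _ _) hp1, le_trans (le_max_right _ _) hp2⟩
      have hq : P ≤ q := ⟨le_trans (le_max_left _ _) hq1, le_trans (le_max_right _ _) hq2⟩
      have d1 := hP p hp
      have d2 := hP q hq
      rw [NNReal.dist_eq] at d1 d2
      calc |((pB (x p.1) (x p.2) : ℝ≥0) : ℝ) - ((pB (x q.1) (x q.2) : ℝ≥0) : ℝ)|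
          ≤ |((pB (x p.1) (x p.2) : ℝ≥0) : ℝ) - (L : ℝ)| +
            |(L : ℝ) - ((pB (x q.1) (x q.2) : ℝ≥0) : ℝ)| := abs_sub_le _ _ _
        _ < ε / 2 + ε / 2 := add_lt_add d1 (abs_sub_comm (L : ℝ) _ ▸ d2)
        _ = ε := by ring
    have hcpos : (0 : ℝ) < (2⁻¹ : ℝ) ^ (k - 1) := by positivity
    obtain ⟨N₀, hN₀⟩ := hC ((2⁻¹ : ℝ) ^ (k - 1) / 2) (by positivity)
    obtain ⟨n₀, m₀, hn₀, hm₀, hlt₀⟩ := hk N₀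
    have hflow : (2⁻¹ : ℝ) ^ (k - 1) ≤ ((pB (x n₀) (x m₀) : ℝ≥0) : ℝ) := by
      obtain ⟨j, hj, hjk⟩ := lcp_lt_coe hlt₀
      have hle : lcp (x n₀) (x m₀) ≤ ((k - 1 : ℕ) : ℕ∞) := by
        rw [hj]; exact Nat.cast_le.mpr (by omega)
      have h1 := epow_anti hle
      rw [epow_coe] at h1
      calc (2⁻¹ : ℝ) ^ (k - 1) = (((2⁻¹ : ℝ≥0) ^ (k - 1) : ℝ≥0) : ℝ) := by
            push_cast; norm_num
        _ ≤ _ := by exact_mod_cast h1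
    have hck : (2⁻¹ : ℝ) ^ k = (2⁻¹ : ℝ) ^ (k - 1) / 2 := by
      rw [show k = (k - 1) + 1 by omega, pow_succ]
      rw [show (k - 1) + 1 - 1 = k - 1 by omega]
      ring
    have hbound : ∀ p : ℕ × ℕ, N₀ ≤ p.1 → N₀ ≤ p.2 →
        lcp (x p.1) (x p.2) < (k : ℕ∞) := by
      intro p hp1 hp2
      by_contra hge
      push_neg at hge
      have hup : ((pB (x p.1) (x p.2) : ℝ≥0) : ℝ) ≤ (2⁻¹ : ℝ) ^ k := by
        have h1 := epow_anti hge
        rw [epow_coe] at h1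
        calc ((pB (x p.1) (x p.2) : ℝ≥0) : ℝ) ≤ (((2⁻¹ : ℝ≥0) ^ k : ℝ≥0) : ℝ) := by
              exact_mod_cast h1
          _ = (2⁻¹ : ℝ) ^ k := by push_cast; norm_num
      have hd := hN₀ p (n₀, m₀) hp1 hp2 hn₀ hm₀
      have habs := (abs_lt.mp hd).1
      linarith
    obtain ⟨N₁', hN₁⟩ := hC ((2⁻¹ : ℝ) ^ (k - 1)) hcpos
    set N₁ := max N₀ N₁' with hN₁def
    have hjj : ∀ p : ℕ × ℕ, N₁ ≤ p.1 → N₁ ≤ p.2 →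
        ∃ j : ℕ, lcp (x p.1) (x p.2) = (j : ℕ∞) ∧ j ≤ k - 1 := by
      intro p hp1 hp2
      obtain ⟨j, hj, hjk⟩ := lcp_lt_coe (hbound p (le_trans (le_max_left _ _) hp1)
        (le_trans (le_max_left _ _) hp2))
      exact ⟨j, hj, by omega⟩
    have fe : ∀ (p q : ℕ × ℕ) (jp jq : ℕ), N₁ ≤ p.1 → N₁ ≤ p.2 → N₁ ≤ q.1 → N₁ ≤ q.2 →
        lcp (x p.1) (x p.2) = (jp : ℕ∞) → lcp (x q.1) (x q.2) = (jq : ℕ∞) →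
        jp ≤ k - 1 → jq ≤ k - 1 → jp = jq := by
      intro p q jp jq hp1 hp2 hq1 hq2 ep eq' hjp hjq
      have hd := hN₁ p q (le_trans (le_max_right _ _) hp1) (le_trans (le_max_right _ _) hp2)
        (le_trans (le_max_right _ _) hq1) (le_trans (le_max_right _ _) hq2)
      have e1 : ((pB (x p.1) (x p.2) : ℝ≥0) : ℝ) = (2⁻¹ : ℝ) ^ jp := by
        unfold pB
        rw [ep, epow_coe]
        push_cast; norm_num
      have e2 : ((pB (x q.1) (x q.2) : ℝ≥0) : ℝ) = (2⁻¹ : ℝ) ^ jq := by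
        unfold pB
        rw [eq', epow_coe]
        push_cast; norm_num
      refine pow_gap (K := k - 1) hjp hjq ?_
      rw [← e1, ← e2]
      exact hd
    have hconst : ∀ n m, N₁ ≤ n → N₁ ≤ m → x n = x m := by
      intro n m hn hm
      obtain ⟨a, ha, hak⟩ := hjj (n, n) hn hn
      obtain ⟨b, hb, hbk⟩ := hjj (n, m) hn hm
      obtain ⟨d, hd, hdk⟩ := hjj (m, m) hm hm
      have hab : a = b := fe (n, n) (n, m) a b hn hn hn hm ha hb hak hbk
      have hdb : d = b := fe (m, m) (n, m) d b hm hm hn hm hd hb hdk hbk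
      refine eq_of_lcp ?_ ?_
      · rw [ha, hb, hab]
      · rw [hd, hb, hdb]
    have hev : ∀ᶠ p : ℕ × ℕ in Filter.atTop,
        pB (x p.1) (x p.2) = pB (x N₁) (x N₁) := by
      refine Filter.eventually_atTop.mpr ⟨(N₁, N₁), fun p hp => ?_⟩
      rw [hconst p.1 N₁ hp.1 le_rfl, hconst p.2 N₁ hp.2 le_rfl]
    have hten : Filter.Tendsto (fun mn : ℕ × ℕ => pB (x mn.1) (x mn.2)) Filter.atTop
        (nhds (pB (x N₁) (x N₁))) :=
      Filter.Tendsto.congr' (Filter.EventuallyEq.symm hev) tendsto_const_nhds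
    refine ⟨x N₁, tendsto_nhds_unique hten hL, fun ε hε => ⟨N₁, fun n hn => ?_⟩⟩
    rw [hconst n N₁ hn le_rfl]
    exact lt_add_of_pos_right _ hε
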